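/- Let G₀ be an edge-weighted locally finite graph with weakly connected completion. Enlarge G₀ to G₁ on the same vertex set by adding a sequence of edges e_n with lengths R_n → 0, and suppose there is a constant C > 0 such that d₁(u,v) ≤ d₀(u,v) ≤ C·d₁(u,v) for all vertices u,v, where d₀ and d₁ are the path metrics of G₀ and G₁. Then the completion of G₁ is weakly connected. -/

import Mathlib

open UniformSpace Filter Topology
open scoped ENNReal

noncomputable section

/-- A locally finite edge-weighted (resistance) graph. -/
structure WGraph (V : Type*) where
  Adj : V → V → Prop
  symm : ∀ u v, Adj u v → Adj v u
  loopless : ∀ v, ¬ Adj v v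
  R : V → V → ℝ
  Rsymm : ∀ u v, R u v = R v u
  Rpos : ∀ u v, Adj u v → 0 < R u v
  locFin : ∀ v, {u | Adj u v}.Finite

namespace WGraph

variable {V : Type*} (G : WGraph V)

/-- The set of edges, as unordered pairs of vertices. -/
def edgeSet : Set (Sym2 V) := {e | ∃ u v, G.Adj u v ∧ e = s(u, v)}

/-- The set of total lengths of finite paths joining `u` to `v`. -/
def pathLengths (u v : V) : Set ℝ :=
  {L | ∃ (n : ℕ) (p : ℕ → V), p 0 = u ∧ p n = v ∧
        (∀ k < n, G.Adj (p k) (p (k + 1))) ∧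
        L = ∑ k ∈ Finset.range n, G.R (p k) (p (k + 1))}

/-- `G` is connected: any two vertices are joined by a finite path. -/
def Connected : Prop := ∀ u v : V, (G.pathLengths u v).Nonempty

/-- The metric on the vertex set is the minimal resistance path metric of `G`. -/
def IsPathMetric [MetricSpace V] : Prop :=
  ∀ u v : V, dist u v = sInf (G.pathLengths u v)

/-- Eventually flat functions: the values differ across only finitely many edges. -/
def EventuallyFlat (φ : V → ℝ) : Prop :=
  {p : V × V | G.Adj p.1 p.2 ∧ φ p.1 ≠ φ p.2}.Finite

open Classical in
/-- The conductance: the reciprocal resistance on edges, `0` off edges. -/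
def cond (u v : V) : ℝ := if G.Adj u v then (G.R u v)⁻¹ else 0

/-- `f` is harmonic at `v`: its value is the conductance-weighted average of the
values at the adjacent vertices. -/
def HarmonicAt (f : V → ℝ) (v : V) : Prop :=
  f v = (∑ u ∈ (G.locFin v).toFinset, G.cond u v)⁻¹ *
          ∑ u ∈ (G.locFin v).toFinset, G.cond u v * f u

/-- The weighted `ℓ²(μ)` inner product. -/
def winner (μ : V → ℝ) (f g : V → ℝ) : ℝ := ∑' v, f v * g v * μ v

/-- The bilinear (energy) form associated to conductances `C`. -/
def Bform (C : V → V → ℝ) (f g : V → ℝ) : ℝ :=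
  (1 / 2) * ∑' p : V × V, C p.1 p.2 * (f p.1 - f p.2) * (g p.1 - g p.2)

/-- The formal Laplacian `Δ_μ`. -/
def lap (C : V → V → ℝ) (μ : V → ℝ) (f : V → ℝ) (v : V) : ℝ :=
  (1 / μ v) * ∑' u, C u v * (f v - f u)

/-- The (possibly infinite) energy of `f`. -/
def energy (C : V → V → ℝ) (f : V → ℝ) : ℝ≥0∞ :=
  (1 / 2) * ∑' p : V × V, ENNReal.ofReal (C p.1 p.2 * (f p.1 - f p.2) ^ 2)

variable [MetricSpace V]

/-- A path in the completion `Ḡ` joining `x` and `y`: a two-sided sequence of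
vertices (stationary steps are allowed, so this encodes finite paths, rays and
double rays) converging to `x` and `y` at its two ends. -/
structure CPath (x y : Completion V) where
  p : ℤ → V
  step : ∀ k, p k = p (k + 1) ∨ G.Adj (p k) (p (k + 1))
  tendsto_left : Tendsto (fun n : ℕ => ((p (-(n : ℤ)) : V) : Completion V)) atTop (nhds x)
  tendsto_right : Tendsto (fun n : ℕ => ((p (n : ℤ) : V) : Completion V)) atTop (nhds y)

end WGraph

/-- The path `γ` uses (contains) the edge `e`. -/
def WGraph.CPath.uses {V : Type*} [MetricSpace V] {G : WGraph V}
    {x y : Completion V} (γ : G.CPath x y) (e : Sym2 V) : Prop :=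
  ∃ k : ℤ, γ.p k ≠ γ.p (k + 1) ∧ e = s(γ.p k, γ.p (k + 1))

namespace WGraph

variable {V : Type*} (G : WGraph V) [MetricSpace V]

/-- The completion `Ḡ` is weakly connected: any two distinct points admit a
finite set of edges met by every path joining them. -/
def WeaklyConnected : Prop :=
  ∀ x y : Completion V, x ≠ y →
    ∃ W : Set (Sym2 V), W.Finite ∧ W ⊆ G.edgeSet ∧
      ∀ γ : G.CPath x y, ∃ e ∈ W, γ.uses e

end WGraph



namespace AddEAux

variable {V : Type*} {G : WGraph V}

lemma pathLengths_nonneg {u v : V} {L : ℝ} (hL : L ∈ G.pathLengths u v) : 0 ≤ L := by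
  obtain ⟨n, p, -, -, hadj, rfl⟩ := hL
  exact Finset.sum_nonneg fun k hk => le_of_lt (G.Rpos _ _ (hadj k (Finset.mem_range.1 hk)))

lemma adj_of_mem_edgeSet {a b : V} (h : s(a, b) ∈ G.edgeSet) : G.Adj a b := by
  obtain ⟨u, v, huv, he⟩ := h
  rcases Sym2.eq_iff.1 he with ⟨rfl, rfl⟩ | ⟨rfl, rfl⟩
  · exact huv
  · exact G.symm _ _ huv

lemma mem_edgeSet_of_adj {a b : V} (h : G.Adj a b) : s(a, b) ∈ G.edgeSet := ⟨a, b, h, rfl⟩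

/-- Cumulative sums of a two-sided sequence of block lengths. -/
def csum (m : ℤ → ℕ) (k : ℤ) : ℤ :=
  (∑ i ∈ Finset.range k.toNat, (m i : ℤ)) - ∑ i ∈ Finset.range (-k).toNat, (m (-(i : ℤ) - 1) : ℤ)

lemma csum_zero (m : ℤ → ℕ) : csum m 0 = 0 := by simp [csum]

lemma csum_succ (m : ℤ → ℕ) (k : ℤ) : csum m (k + 1) = csum m k + m k := by
  rcases le_or_gt 0 k with hk | hk
  · have h1 : (k + 1).toNat = k.toNat + 1 := by omega
    have h2 : (-(k + 1)).toNat = 0 := by omega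
    have h3 : (-k).toNat = 0 := by omega
    have h4 : (k.toNat : ℤ) = k := by omega
    unfold csum
    rw [h1, h2, h3, Finset.sum_range_succ, Finset.sum_range_zero, h4]
    ring
  · have h1 : (k + 1).toNat = 0 := by omega
    have h2 : k.toNat = 0 := by omega
    have h3 : (-k).toNat = (-(k + 1)).toNat + 1 := by omega
    have h4 : (-((-(k + 1)).toNat : ℤ) - 1) = k := by omega
    unfold csum
    rw [h1, h2, h3, Finset.sum_range_succ, h4, Finset.sum_range_zero]
    ring

variable {m : ℤ → ℕ} (hm : ∀ k, 1 ≤ m k)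

include hm

lemma csum_strictMono : StrictMono (csum m) := by
  apply strictMono_int_of_lt_succ
  intro k
  have := hm k
  rw [csum_succ]
  omega

lemma le_csum : ∀ n : ℕ, (n : ℤ) ≤ csum m n := by
  intro n
  induction n with
  | zero => simp [csum_zero]
  | succ n ih =>
      have := hm n
      have h : ((n : ℤ) + 1) = ((n + 1 : ℕ) : ℤ) := by push_cast; ring
      rw [← h, csum_succ]
      omega

lemma csum_neg_le : ∀ n : ℕ, csum m (-(n : ℤ)) ≤ -(n : ℤ) := by
  intro n
  induction n with
  | zero => simp [csum_zero]
  | succ n ih =>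
      have := hm (-((n : ℤ) + 1))
      have h : csum m (-((n:ℤ)+1) + 1) = csum m (-((n:ℤ)+1)) + m (-((n:ℤ)+1)) := csum_succ m _
      have h2 : (-((n:ℤ)+1) + 1) = -(n:ℤ) := by ring
      rw [h2] at h
      push_cast
      omega

lemma csum_exists_block (j : ℤ) : ∃ k, csum m k ≤ j ∧ j < csum m (k + 1) := by
  have hbdd : ∃ b, ∀ z : ℤ, csum m z ≤ j → z ≤ b := by
    refine ⟨max j 0, fun z hz => ?_⟩
    by_contra hzb
    push_neg at hzb
    have hz0 : 0 ≤ z := le_trans (le_max_right _ _) (le_of_lt hzb)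
    have := le_csum hm z.toNat
    rw [show ((z.toNat : ℤ)) = z by omega] at this
    have := le_trans this hz
    omega
  have hinh : ∃ z : ℤ, csum m z ≤ j := by
    rcases le_or_gt 0 j with hj | hj
    · exact ⟨0, by rw [csum_zero]; exact hj⟩
    · refine ⟨j, ?_⟩
      have := csum_neg_le hm (-j).toNat
      rw [show (-((-j).toNat : ℤ)) = j by omega] at this
      omega
  obtain ⟨k, hk1, hk2⟩ := Int.exists_greatest_of_bdd hbdd hinh
  refine ⟨k, hk1, ?_⟩
  by_contra h
  push_neg at h
  have := hk2 (k + 1) h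
  omega

omit hm

/-- Pigeonhole: along a path in the completion which converges at an end, the
resistances of the strictly-new edges used tend to `0`. -/
lemma aux_pigeon {V : Type*} [MetricSpace V] (G0 G1 : WGraph V) (e : ℕ → Sym2 V)
    (henum : G1.edgeSet \ G0.edgeSet ⊆ Set.range e)
    (hlen : Tendsto (fun n => Sym2.lift ⟨G1.R, G1.Rsymm⟩ (e n)) atTop (𝓝 0))
    (a b : ℕ → V) (z : Completion V)
    (ha : Tendsto (fun n => ((a n : V) : Completion V)) atTop (𝓝 z))
    (hb : Tendsto (fun n => ((b n : V) : Completion V)) atTop (𝓝 z))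
    (hstep : ∀ n, a n = b n ∨ G1.Adj (a n) (b n))
    (f : ℕ → ℝ)
    (hf0 : ∀ n, (a n = b n ∨ G0.Adj (a n) (b n)) → f n = 0)
    (hf1 : ∀ n, ¬(a n = b n ∨ G0.Adj (a n) (b n)) → f n = G1.R (a n) (b n)) :
    Tendsto f atTop (𝓝 0) := by
  have hnn : ∀ n, 0 ≤ f n := by
    intro n
    by_cases h : a n = b n ∨ G0.Adj (a n) (b n)
    · rw [hf0 n h]
    · rw [hf1 n h]
      push_neg at h
      rcases hstep n with h1 | h1
      · exact absurd h1 h.1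
      · exact le_of_lt (G1.Rpos _ _ h1)
  refine Metric.tendsto_atTop.2 ?_
  intro δ hδ
  by_contra hN
  push_neg at hN
  have hfreq : ∃ᶠ n in atTop, δ ≤ f n := by
    rw [Filter.frequently_atTop]
    intro N
    obtain ⟨n, hn, hd⟩ := hN N
    refine ⟨n, hn, ?_⟩
    rwa [Real.dist_0_eq_abs, abs_of_nonneg (hnn n)] at hd
  have hTfin : {n : ℕ | δ ≤ Sym2.lift ⟨G1.R, G1.Rsymm⟩ (e n)}.Finite := by
    have hev : ∀ᶠ n in atTop, Sym2.lift ⟨G1.R, G1.Rsymm⟩ (e n) < δ :=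
      hlen.eventually (tendsto_id.eventually_lt_const hδ)
    obtain ⟨N, hNp⟩ := Filter.eventually_atTop.1 hev
    refine Set.Finite.subset (Set.finite_Iio N) (fun n hn => ?_)
    by_contra hcon
    simp only [Set.mem_Iio, not_lt] at hcon
    exact absurd (hNp n hcon) (not_lt.2 hn)
  have hE : (e '' {n : ℕ | δ ≤ Sym2.lift ⟨G1.R, G1.Rsymm⟩ (e n)}).Finite := hTfin.image e
  set E := e '' {n : ℕ | δ ≤ Sym2.lift ⟨G1.R, G1.Rsymm⟩ (e n)} with hEdef
  have hPr : {pr : V × V | s(pr.1, pr.2) ∈ E ∧ pr.1 ≠ pr.2}.Finite := by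
    have hsub : {pr : V × V | s(pr.1, pr.2) ∈ E ∧ pr.1 ≠ pr.2} ⊆
        ⋃ ed ∈ E, {pr : V × V | s(pr.1, pr.2) = ed ∧ pr.1 ≠ pr.2} := by
      intro pr hpr
      exact Set.mem_biUnion hpr.1 ⟨rfl, hpr.2⟩
    refine Set.Finite.subset (Set.Finite.biUnion hE (fun ed _ => ?_)) hsub
    induction ed using Sym2.ind with
    | _ u v =>
      refine Set.Finite.subset ((Set.finite_singleton (v, u)).insert (u, v)) ?_
      rintro ⟨c, d⟩ ⟨hcd, hne⟩
      rcases Sym2.eq_iff.1 hcd with ⟨rfl, rfl⟩ | ⟨rfl, rfl⟩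
      · exact Set.mem_insert _ _
      · exact Set.mem_insert_of_mem _ rfl
  set Pr := {pr : V × V | s(pr.1, pr.2) ∈ E ∧ pr.1 ≠ pr.2} with hPrdef
  have hfreq2 : ∃ᶠ n in atTop, (a n, b n) ∈ Pr := by
    refine hfreq.mono (fun n hn => ?_)
    have hne : ¬(a n = b n ∨ G0.Adj (a n) (b n)) := by
      intro h
      rw [hf0 n h] at hn
      linarith
    have hfr : f n = G1.R (a n) (b n) := hf1 n hne
    push_neg at hne
    have hadj1 : G1.Adj (a n) (b n) := (hstep n).resolve_left hne.1
    have hmem : s(a n, b n) ∈ G1.edgeSet \ G0.edgeSet :=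
      ⟨mem_edgeSet_of_adj hadj1, fun hc => hne.2 (adj_of_mem_edgeSet hc)⟩
    obtain ⟨m', hm'⟩ := henum hmem
    refine ⟨⟨m', ?_, hm'⟩, hne.1⟩
    show δ ≤ Sym2.lift ⟨G1.R, G1.Rsymm⟩ (e m')
    rw [hm', Sym2.lift_mk]
    rw [hfr] at hn
    exact hn
  have hpick : ∃ pr ∈ Pr, ∃ᶠ n in atTop, (a n, b n) = pr := by
    by_contra hcon
    push_neg at hcon
    have hall : ∀ᶠ n in atTop, ∀ pr ∈ Pr, (a n, b n) ≠ pr :=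
      (Set.Finite.eventually_all hPr).2 (fun pr hpr => by
        have := hcon pr hpr
        simpa only [Filter.not_frequently] using this)
    obtain ⟨n, hn1, hn2⟩ := (hfreq2.and_eventually hall).exists
    exact hn2 _ hn1 rfl
  obtain ⟨⟨u, v⟩, hprmem, hprfreq⟩ := hpick
  have huv : u ≠ v := hprmem.2
  have hzu : z = (u : Completion V) := by
    have h1 : ∃ᶠ w in 𝓝 z, w ∈ ({(u : Completion V)} : Set (Completion V)) := by
      refine ha.frequently (hprfreq.mono fun n hn => ?_)
      have : a n = u := (Prod.ext_iff.1 hn).1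
      simp [this]
    have := mem_closure_iff_frequently.2 h1
    rwa [closure_singleton, Set.mem_singleton_iff] at this
  have hzv : z = (v : Completion V) := by
    have h1 : ∃ᶠ w in 𝓝 z, w ∈ ({(v : Completion V)} : Set (Completion V)) := by
      refine hb.frequently (hprfreq.mono fun n hn => ?_)
      have : b n = v := (Prod.ext_iff.1 hn).2
      simp [this]
    have := mem_closure_iff_frequently.2 h1
    rwa [closure_singleton, Set.mem_singleton_iff] at this
  exact huv (UniformSpace.Completion.coe_injective V (hzu ▸ hzv))

end AddEAux

open AddEAux in
/-- adding a sequence of edges with lengths tending to `0`, in a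
way which changes the path metric only up to a bi-Lipschitz constant, preserves
weak connectivity of the completion. -/
theorem weaklyConnected_of_addEdges {V : Type*} [MetricSpace V] [Countable V]
    (G0 G1 : WGraph V)
    (hsub : ∀ u v, G0.Adj u v → G1.Adj u v)
    (hRsame : ∀ u v, G0.Adj u v → G0.R u v = G1.R u v)
    (e : ℕ → Sym2 V)
    (henum : G1.edgeSet \ G0.edgeSet ⊆ Set.range e)
    (hmem : ∀ n, e n ∈ G1.edgeSet)
    (hlen : Filter.Tendsto (fun n => Sym2.lift ⟨G1.R, G1.Rsymm⟩ (e n)) Filter.atTop (nhds 0))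
    (hmet : G1.IsPathMetric) (hconn0 : G0.Connected)
    (C : ℝ) (hC : 0 < C)
    (hcompare : ∀ u v : V, dist u v ≤ sInf (G0.pathLengths u v) ∧
      sInf (G0.pathLengths u v) ≤ C * dist u v)
    (h0 : G0.WeaklyConnected) :
    G1.WeaklyConnected := by
  classical
  intro x y hxy
  obtain ⟨W0, hW0fin, hW0sub, hW0⟩ := h0 x y hxy
  -- a positive lower bound for the lengths of the edges in `W0`
  obtain ⟨ρ, hρpos, hρ⟩ : ∃ ρ > (0:ℝ), ∀ ed ∈ W0, ρ ≤ Sym2.lift ⟨G0.R, G0.Rsymm⟩ ed := by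
    by_cases hne : (hW0fin.toFinset.image (Sym2.lift ⟨G0.R, G0.Rsymm⟩)).Nonempty
    · refine ⟨(hW0fin.toFinset.image (Sym2.lift ⟨G0.R, G0.Rsymm⟩)).min' hne, ?_, ?_⟩
      · obtain ⟨ed, hed, hmin⟩ :=
          Finset.mem_image.1 ((hW0fin.toFinset.image (Sym2.lift ⟨G0.R, G0.Rsymm⟩)).min'_mem hne)
        rw [← hmin]
        obtain ⟨u, v, hadj, rfl⟩ := hW0sub (hW0fin.mem_toFinset.1 hed)
        rw [Sym2.lift_mk]
        exact G0.Rpos _ _ hadj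
      · intro ed hed
        exact Finset.min'_le _ _ (Finset.mem_image_of_mem _ (hW0fin.mem_toFinset.2 hed))
    · exact ⟨1, one_pos, fun ed hed =>
        absurd ⟨_, Finset.mem_image_of_mem _ (hW0fin.mem_toFinset.2 hed)⟩ hne⟩
  have hC1 : (0:ℝ) < C + 1 := by linarith
  set ε := ρ / (C + 1) with hεdef
  have hεpos : 0 < ε := div_pos hρpos hC1
  have hCερ : (C + 1) * ε = ρ := by
    rw [hεdef]
    field_simp
  set S := {n : ℕ | ε ≤ Sym2.lift ⟨G1.R, G1.Rsymm⟩ (e n)} with hSdef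
  have hSfin : S.Finite := by
    have hev : ∀ᶠ n in atTop, Sym2.lift ⟨G1.R, G1.Rsymm⟩ (e n) < ε :=
      hlen.eventually (tendsto_id.eventually_lt_const hεpos)
    obtain ⟨N, hNp⟩ := Filter.eventually_atTop.1 hev
    refine Set.Finite.subset (Set.finite_Iio N) (fun n hn => ?_)
    by_contra hcon
    simp only [Set.mem_Iio, not_lt] at hcon
    exact absurd (hNp n hcon) (not_lt.2 hn)
  refine ⟨W0 ∪ e '' S, hW0fin.union (hSfin.image e), ?_, ?_⟩
  · rintro ed (hed | ⟨n, -, rfl⟩)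
    · obtain ⟨u, v, hadj, rfl⟩ := hW0sub hed
      exact ⟨u, v, hsub _ _ hadj, rfl⟩
    · exact hmem n
  intro γ
  by_contra hcon
  push_neg at hcon
  have hav : ∀ k : ℤ, γ.p k ≠ γ.p (k + 1) → s(γ.p k, γ.p (k + 1)) ∉ W0 ∪ e '' S :=
    fun k hne hm => hcon _ hm ⟨k, hne, rfl⟩
  set P := γ.p with hPdef
  set newR : ℤ → ℝ := fun k =>
    if P k = P (k + 1) ∨ G0.Adj (P k) (P (k + 1)) then 0 else G1.R (P k) (P (k + 1)) with hnewR
  have hnewR0 : ∀ k, (P k = P (k + 1) ∨ G0.Adj (P k) (P (k + 1))) → newR k = 0 :=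
    fun k h => if_pos h
  have hnewR1 : ∀ k, ¬(P k = P (k + 1) ∨ G0.Adj (P k) (P (k + 1))) →
      newR k = G1.R (P k) (P (k + 1)) := fun k h => if_neg h
  -- construction of the replacement blocks
  have hblocks : ∀ k : ℤ, ∃ (mk : ℕ) (sg : ℕ → V),
      1 ≤ mk ∧ sg 0 = P k ∧ (∀ i, mk ≤ i → sg i = P (k + 1)) ∧
      (∀ i, sg i = sg (i + 1) ∨ G0.Adj (sg i) (sg (i + 1))) ∧
      (∀ i, sg i ≠ sg (i + 1) → s(sg i, sg (i + 1)) ∉ W0) ∧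
      (∀ i, dist (sg i) (P k) ≤ dist (P k) (P (k + 1)) + (C + 1) * newR k) := by
    intro k
    by_cases hcase : P k = P (k + 1) ∨ G0.Adj (P k) (P (k + 1))
    · -- trivial block: keep the step
      refine ⟨1, fun i => if i = 0 then P k else P (k + 1), le_refl 1, if_pos rfl, ?_, ?_, ?_, ?_⟩
      · intro i hi
        simp only [if_neg (by omega : ¬ i = 0)]
      · intro i
        by_cases hi : i = 0
        · subst hi
          simpa using hcase
        · left
          simp only [if_neg hi, if_neg (by omega : ¬ i + 1 = 0)]
      · intro i hnei hmemW
        by_cases hi : i = 0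
        · subst hi
          simp only [if_pos rfl, if_neg (by omega : ¬ (0:ℕ) + 1 = 0)] at hnei hmemW
          exact hav k hnei (Or.inl hmemW)
        · simp only [if_neg hi, if_neg (by omega : ¬ i + 1 = 0)] at hnei
          exact hnei rfl
      · intro i
        have h0' : newR k = 0 := hnewR0 k hcase
        have hd0 : (0:ℝ) ≤ dist (P k) (P (k + 1)) := dist_nonneg
        show dist (if i = 0 then P k else P (k + 1)) (P k) ≤
          dist (P k) (P (k + 1)) + (C + 1) * newR k
        rw [h0', mul_zero, add_zero]
        by_cases hi : i = 0
        · rw [if_pos hi, dist_self]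
          exact hd0
        · rw [if_neg hi, dist_comm]
    · -- detour block
      push_neg at hcase
      obtain ⟨hne, hnadj⟩ := hcase
      have hadj1 : G1.Adj (P k) (P (k + 1)) := (γ.step k).resolve_left hne
      have hrpos : 0 < G1.R (P k) (P (k + 1)) := G1.Rpos _ _ hadj1
      have hnewRk : newR k = G1.R (P k) (P (k + 1)) := hnewR1 k (by push_neg; exact ⟨hne, hnadj⟩)
      have hedge : s(P k, P (k + 1)) ∈ G1.edgeSet \ G0.edgeSet :=
        ⟨mem_edgeSet_of_adj hadj1, fun hc => hnadj (adj_of_mem_edgeSet hc)⟩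
      obtain ⟨m', hm'⟩ := henum hedge
      have hrε : G1.R (P k) (P (k + 1)) < ε := by
        have hm'S : m' ∉ S := by
          intro hS
          exact hav k hne (Or.inr ⟨m', hS, hm'⟩)
        rw [hSdef] at hm'S
        simp only [Set.mem_setOf_eq, not_le] at hm'S
        rwa [hm', Sym2.lift_mk] at hm'S
      have hd1 : dist (P k) (P (k + 1)) ≤ G1.R (P k) (P (k + 1)) := by
        rw [hmet]
        refine csInf_le ⟨0, fun L hL => pathLengths_nonneg hL⟩ ?_
        refine ⟨1, fun i => if i = 0 then P k else P (k + 1), if_pos rfl,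
          if_neg (by omega), ?_, ?_⟩
        · intro j hj
          interval_cases j
          simpa using hadj1
        · rw [Finset.sum_range_one]
          simp
      have hs0 : sInf (G0.pathLengths (P k) (P (k + 1))) < (C + 1) * G1.R (P k) (P (k + 1)) := by
        have h2 := (hcompare (P k) (P (k + 1))).2
        have : C * dist (P k) (P (k + 1)) ≤ C * G1.R (P k) (P (k + 1)) :=
          mul_le_mul_of_nonneg_left hd1 (le_of_lt hC)
        nlinarith
      obtain ⟨L, hLmem, hLlt⟩ := exists_lt_of_csInf_lt (hconn0 _ _) hs0
      obtain ⟨n, pp, hpp0, hppn, hppadj, hLsum⟩ := hLmem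
      have hn1 : 1 ≤ n := by
        rcases Nat.eq_zero_or_pos n with h | h
        · subst h
          exact absurd (hpp0 ▸ hppn) hne
        · exact h
      have hterm_nonneg : ∀ j ∈ Finset.range n, 0 ≤ G0.R (pp j) (pp (j + 1)) :=
        fun j hj => le_of_lt (G0.Rpos _ _ (hppadj j (Finset.mem_range.1 hj)))
      have hLub : L < (C + 1) * ε := lt_trans hLlt (by nlinarith)
      have hLρ : L < ρ := by rwa [hCερ] at hLub
      refine ⟨n, fun i => pp (min i n), hn1, ?_, ?_, ?_, ?_, ?_⟩
      · show pp (min 0 n) = P k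
        rw [show min 0 n = 0 from by omega]
        exact hpp0
      · intro i hi
        show pp (min i n) = P (k + 1)
        rw [show min i n = n from by omega]
        exact hppn
      · intro i
        rcases lt_or_ge i n with hi | hi
        · right
          show G0.Adj (pp (min i n)) (pp (min (i + 1) n))
          rw [show min i n = i from by omega, show min (i + 1) n = i + 1 from by omega]
          exact hppadj i hi
        · left
          show pp (min i n) = pp (min (i + 1) n)
          rw [show min i n = n from by omega, show min (i + 1) n = n from by omega]
      · intro i hnei hmemW
        rcases lt_or_ge i n with hi | hi
        · simp only [show min i n = i from by omega, show min (i + 1) n = i + 1 from by omega]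
            at hnei hmemW
          have hedgeL : G0.R (pp i) (pp (i + 1)) ≤ L := by
            rw [hLsum]
            exact Finset.single_le_sum hterm_nonneg (Finset.mem_range.2 hi)
          have := hρ _ hmemW
          rw [Sym2.lift_mk] at this
          linarith
        · simp only [show min i n = n from by omega, show min (i + 1) n = n from by omega]
            at hnei
          exact hnei rfl
      · intro i
        show dist (pp (min i n)) (P k) ≤ dist (P k) (P (k + 1)) + (C + 1) * newR k
        set i' := min i n with hi'def
        have hi'n : i' ≤ n := min_le_right _ _
        have hpartial : (∑ j ∈ Finset.range i', G0.R (pp j) (pp (j + 1))) ∈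
            G0.pathLengths (P k) (pp i') :=
          ⟨i', pp, hpp0, rfl, fun j hj => hppadj j (lt_of_lt_of_le hj hi'n), rfl⟩
        have hdle : dist (P k) (pp i') ≤ ∑ j ∈ Finset.range i', G0.R (pp j) (pp (j + 1)) :=
          le_trans ((hcompare (P k) (pp i')).1)
            (csInf_le ⟨0, fun L' hL' => pathLengths_nonneg hL'⟩ hpartial)
        have hsumle : (∑ j ∈ Finset.range i', G0.R (pp j) (pp (j + 1))) ≤ L := by
          rw [hLsum]
          exact Finset.sum_le_sum_of_subset_of_nonneg
            (Finset.range_subset_range.2 hi'n) (fun j hj _ => hterm_nonneg j hj)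
        have : dist (pp i') (P k) < (C + 1) * newR k := by
          rw [dist_comm, hnewRk]
          exact lt_of_le_of_lt (le_trans hdle hsumle) hLlt
        have hdn : 0 ≤ dist (P k) (P (k + 1)) := dist_nonneg
        linarith
  choose m sg hm1 hsg0 hsgtop hsgstep hsgav hsgdist using hblocks
  set σ := csum m with hσdef
  have hσsucc : ∀ k, σ (k + 1) = σ k + m k := fun k => csum_succ m k
  have hσmono : StrictMono σ := csum_strictMono hm1
  choose K hK1 hK2 using fun j => csum_exists_block hm1 j
  rw [← hσdef] at hK1 hK2
  have hKuniq : ∀ j k, σ k ≤ j → j < σ (k + 1) → K j = k := by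
    intro j k h1 h2
    by_contra hne
    rcases lt_or_gt_of_ne hne with h | h
    · have h3 : σ (K j + 1) ≤ σ k := hσmono.monotone (by omega)
      have h4 := hK2 j
      omega
    · have h3 : σ (k + 1) ≤ σ (K j) := hσmono.monotone (by omega)
      have h4 := hK1 j
      omega
  set q : ℤ → V := fun j => sg (K j) (j - σ (K j)).toNat with hqdef
  have hqstep : ∀ j : ℤ, ∃ i, q j = sg (K j) i ∧ q (j + 1) = sg (K j) (i + 1) := by
    intro j
    have h1 := hK1 j
    have h2 := hK2 j
    refine ⟨(j - σ (K j)).toNat, rfl, ?_⟩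
    rcases lt_or_eq_of_le (by omega : j + 1 ≤ σ (K j + 1)) with hlt | heq
    · have hK' : K (j + 1) = K j := hKuniq (j + 1) (K j) (by omega) hlt
      show sg (K (j + 1)) ((j + 1 - σ (K (j + 1))).toNat) = _
      rw [hK']
      congr 1
      omega
    · have hK' : K (j + 1) = K j + 1 := by
        refine hKuniq (j + 1) (K j + 1) (by omega) ?_
        rw [hσsucc (K j + 1)]
        have := hm1 (K j + 1)
        omega
      show sg (K (j + 1)) ((j + 1 - σ (K (j + 1))).toNat) = _
      rw [hK']
      have hidx : ((j + 1) - σ (K j + 1)).toNat = 0 := by omega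
      have hidx2 : (j - σ (K j)).toNat + 1 = m (K j) := by
        have := hσsucc (K j)
        omega
      rw [hidx, hidx2, hsg0 (K j + 1), hsgtop (K j) (m (K j)) (le_refl _)]
  -- tendsto of the new-edge resistances along both ends
  have htendb : Tendsto (fun n : ℕ => ((P ((n : ℤ) + 1) : V) : Completion V)) atTop (𝓝 y) := by
    have h := γ.tendsto_right.comp (tendsto_add_atTop_nat 1)
    refine h.congr (fun n => ?_)
    simp only [Function.comp_apply]
    rw [show ((n + 1 : ℕ) : ℤ) = (n : ℤ) + 1 from by push_cast; ring]
  have htendbl : Tendsto (fun n : ℕ => ((P (-(n : ℤ) + 1) : V) : Completion V)) atTop (𝓝 x) := by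
    have h := γ.tendsto_left.comp (tendsto_sub_atTop_nat 1)
    refine h.congr' ?_
    filter_upwards [Filter.eventually_ge_atTop 1] with n hn
    simp only [Function.comp_apply]
    congr 2
    omega
  have hRpos' : Tendsto (fun n : ℕ => newR (n : ℤ)) atTop (𝓝 0) :=
    aux_pigeon G0 G1 e henum hlen (fun n => P (n : ℤ)) (fun n => P ((n : ℤ) + 1)) y
      γ.tendsto_right htendb (fun n => γ.step _) _
      (fun n h => hnewR0 _ h) (fun n h => hnewR1 _ h)
  have hRneg' : Tendsto (fun n : ℕ => newR (-(n : ℤ))) atTop (𝓝 0) :=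
    aux_pigeon G0 G1 e henum hlen (fun n => P (-(n : ℤ))) (fun n => P (-(n : ℤ) + 1)) x
      γ.tendsto_left htendbl (fun n => γ.step _) _
      (fun n h => hnewR0 _ h) (fun n h => hnewR1 _ h)
  have hdistp : Tendsto (fun n : ℕ => dist (P (n : ℤ)) (P ((n : ℤ) + 1))) atTop (𝓝 0) := by
    have h := γ.tendsto_right.dist htendb
    rw [dist_self] at h
    refine h.congr (fun n => ?_)
    exact UniformSpace.Completion.dist_eq _ _
  have hdistl : Tendsto (fun n : ℕ => dist (P (-(n : ℤ))) (P (-(n : ℤ) + 1))) atTop (𝓝 0) := by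
    have h := γ.tendsto_left.dist htendbl
    rw [dist_self] at h
    refine h.congr (fun n => ?_)
    exact UniformSpace.Completion.dist_eq _ _
  -- convergence of the concatenated path at the right end
  have hqright : Tendsto (fun n : ℕ => ((q (n : ℤ) : V) : Completion V)) atTop (𝓝 y) := by
    refine Metric.tendsto_atTop.2 (fun δ hδ => ?_)
    have hev : ∀ᶠ n : ℕ in atTop,
        dist ((P (n : ℤ) : V) : Completion V) y < δ / 2 ∧
        dist (P (n : ℤ)) (P ((n : ℤ) + 1)) + (C + 1) * newR (n : ℤ) < δ / 2 := by
      have e1 := Metric.tendsto_atTop.1 γ.tendsto_right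
      have h1 : ∀ᶠ n : ℕ in atTop, dist ((P (n : ℤ) : V) : Completion V) y < δ / 2 := by
        obtain ⟨N, hN⟩ := e1 (δ / 2) (by linarith)
        exact Filter.eventually_atTop.2 ⟨N, hN⟩
      have h2 : ∀ᶠ n : ℕ in atTop, dist (P (n : ℤ)) (P ((n : ℤ) + 1)) < δ / 4 := by
        obtain ⟨N, hN⟩ := Metric.tendsto_atTop.1 hdistp (δ / 4) (by linarith)
        refine Filter.eventually_atTop.2 ⟨N, fun n hn => ?_⟩
        have := hN n hn
        rwa [Real.dist_0_eq_abs, abs_of_nonneg dist_nonneg] at this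
      have h3 : ∀ᶠ n : ℕ in atTop, (C + 1) * newR (n : ℤ) < δ / 4 := by
        obtain ⟨N, hN⟩ := Metric.tendsto_atTop.1 hRpos' (δ / (4 * (C + 1))) (by positivity)
        refine Filter.eventually_atTop.2 ⟨N, fun n hn => ?_⟩
        have h4 := hN n hn
        rw [Real.dist_0_eq_abs] at h4
        have h5 : newR (n : ℤ) < δ / (4 * (C + 1)) := lt_of_le_of_lt (le_abs_self _) h4
        have := mul_lt_mul_of_pos_left h5 hC1
        calc (C + 1) * newR (n : ℤ) < (C + 1) * (δ / (4 * (C + 1))) := this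
          _ = δ / 4 := by field_simp
      filter_upwards [h1, h2, h3] with n hn1 hn2 hn3
      exact ⟨hn1, by linarith⟩
    obtain ⟨N, hN⟩ := Filter.eventually_atTop.1 hev
    refine ⟨(σ (N : ℤ)).toNat, fun n hn => ?_⟩
    set j := (n : ℤ) with hj
    have hjN : σ (N : ℤ) ≤ j := by omega
    have hkN : (N : ℤ) ≤ K j := by
      by_contra hcontra
      push_neg at hcontra
      have : σ (K j + 1) ≤ σ (N : ℤ) := hσmono.monotone (by omega)
      have := hK2 j
      omega
    have hkcast : ((K j).toNat : ℤ) = K j := by omega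
    have hNn : N ≤ (K j).toNat := by omega
    obtain ⟨hb1, hb2⟩ := hN (K j).toNat hNn
    rw [hkcast] at hb1 hb2
    have hsd := hsgdist (K j) (j - σ (K j)).toNat
    calc dist ((q j : V) : Completion V) y
        ≤ dist ((q j : V) : Completion V) ((P (K j) : V) : Completion V) +
          dist ((P (K j) : V) : Completion V) y := dist_triangle _ _ _
      _ = dist (q j) (P (K j)) + dist ((P (K j) : V) : Completion V) y := by
          rw [UniformSpace.Completion.dist_eq]
      _ < δ / 2 + δ / 2 := by
          have : dist (q j) (P (K j)) ≤
              dist (P (K j)) (P (K j + 1)) + (C + 1) * newR (K j) := hsd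
          exact add_lt_add_of_le_of_lt (by linarith) hb1
      _ = δ := by ring
  -- convergence of the concatenated path at the left end
  have hqleft : Tendsto (fun n : ℕ => ((q (-(n : ℤ)) : V) : Completion V)) atTop (𝓝 x) := by
    refine Metric.tendsto_atTop.2 (fun δ hδ => ?_)
    have hev : ∀ᶠ n : ℕ in atTop,
        dist ((P (-(n : ℤ)) : V) : Completion V) x < δ / 2 ∧
        dist (P (-(n : ℤ))) (P (-(n : ℤ) + 1)) + (C + 1) * newR (-(n : ℤ)) < δ / 2 := by
      have h1 : ∀ᶠ n : ℕ in atTop, dist ((P (-(n : ℤ)) : V) : Completion V) x < δ / 2 := by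
        obtain ⟨N, hN⟩ := Metric.tendsto_atTop.1 γ.tendsto_left (δ / 2) (by linarith)
        exact Filter.eventually_atTop.2 ⟨N, hN⟩
      have h2 : ∀ᶠ n : ℕ in atTop, dist (P (-(n : ℤ))) (P (-(n : ℤ) + 1)) < δ / 4 := by
        obtain ⟨N, hN⟩ := Metric.tendsto_atTop.1 hdistl (δ / 4) (by linarith)
        refine Filter.eventually_atTop.2 ⟨N, fun n hn => ?_⟩
        have := hN n hn
        rwa [Real.dist_0_eq_abs, abs_of_nonneg dist_nonneg] at this
      have h3 : ∀ᶠ n : ℕ in atTop, (C + 1) * newR (-(n : ℤ)) < δ / 4 := by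
        obtain ⟨N, hN⟩ := Metric.tendsto_atTop.1 hRneg' (δ / (4 * (C + 1))) (by positivity)
        refine Filter.eventually_atTop.2 ⟨N, fun n hn => ?_⟩
        have h4 := hN n hn
        rw [Real.dist_0_eq_abs] at h4
        have h5 : newR (-(n : ℤ)) < δ / (4 * (C + 1)) := lt_of_le_of_lt (le_abs_self _) h4
        have := mul_lt_mul_of_pos_left h5 hC1
        calc (C + 1) * newR (-(n : ℤ)) < (C + 1) * (δ / (4 * (C + 1))) := this
          _ = δ / 4 := by field_simp
      filter_upwards [h1, h2, h3] with n hn1 hn2 hn3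
      exact ⟨hn1, by linarith⟩
    obtain ⟨N, hN⟩ := Filter.eventually_atTop.1 hev
    refine ⟨(-σ (-(N : ℤ) + 1)).toNat + 1, fun n hn => ?_⟩
    set j := -(n : ℤ) with hj
    have hjN : j < σ (-(N : ℤ) + 1) := by omega
    have hkN : K j ≤ -(N : ℤ) := by
      by_contra hcontra
      push_neg at hcontra
      have : σ (-(N : ℤ) + 1) ≤ σ (K j) := hσmono.monotone (by omega)
      have := hK1 j
      omega
    have hkcast : -(((-(K j)).toNat : ℕ) : ℤ) = K j := by omega
    have hNn : N ≤ (-(K j)).toNat := by omega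
    obtain ⟨hb1, hb2⟩ := hN (-(K j)).toNat hNn
    rw [hkcast] at hb1 hb2
    have hsd := hsgdist (K j) (j - σ (K j)).toNat
    calc dist ((q j : V) : Completion V) x
        ≤ dist ((q j : V) : Completion V) ((P (K j) : V) : Completion V) +
          dist ((P (K j) : V) : Completion V) x := dist_triangle _ _ _
      _ = dist (q j) (P (K j)) + dist ((P (K j) : V) : Completion V) x := by
          rw [UniformSpace.Completion.dist_eq]
      _ < δ / 2 + δ / 2 := by
          have : dist (q j) (P (K j)) ≤
              dist (P (K j)) (P (K j + 1)) + (C + 1) * newR (K j) := hsd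
          exact add_lt_add_of_le_of_lt (by linarith) hb1
      _ = δ := by ring
  -- assemble the G0-path and contradict weak connectivity of G0
  have hstepq : ∀ j : ℤ, q j = q (j + 1) ∨ G0.Adj (q j) (q (j + 1)) := by
    intro j
    obtain ⟨i, hq1, hq2⟩ := hqstep j
    rw [hq1, hq2]
    exact hsgstep (K j) i
  set γ0 : G0.CPath x y := ⟨q, hstepq, hqleft, hqright⟩ with hγ0
  obtain ⟨ed, hedW0, j, hnej, hedj⟩ := hW0 γ0
  obtain ⟨i, hq1, hq2⟩ := hqstep j
  have hnej' : sg (K j) i ≠ sg (K j) (i + 1) := by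
    rw [← hq1, ← hq2]
    exact hnej
  refine hsgav (K j) i hnej' ?_
  rw [← hq1, ← hq2]
  rw [hedj] at hedW0
  exact hedW0
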